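/- Let U ⊆ ℝ⁴ be open and convex with coordinates (u,v,x,y), let H : U → ℝ be smooth with ∂_u H = 0, and let ξ_ℓ, ξ_n : U → ℝ, ξ_m : U → ℂ (with ξ_m̄ := conjugate of ξ_m) be smooth and satisfy the residual radiation-gauge conditions (∂_u ξ_ℓ = 0; ∂_u ξ_m̄ = ∂_ζ ξ_ℓ; ∂_u ξ_m = ∂_ζ̄ ξ_ℓ; ∂_u ξ_n = −∂_v ξ_ℓ; ∂_ζ̄ ξ_m̄ + ∂_ζ ξ_m = 0). Define K_m̄m̄ := −2 ∂_ζ ξ_m̄, K_nm̄ := (∂_v − (H/2)∂_u)ξ_m̄ + (1/2)(∂_ζ H)ξ_ℓ − ∂_ζ ξ_n, K_nn := 2(∂_v − (H/2)∂_u)ξ_n + (∂_ζ H)ξ_m + (∂_ζ̄ H)ξ_m̄, and η := (i/2)·u²·∂_ζ̄² K_m̄m̄. Then: (i) ∂_u² K_nn = 0, ∂_u ∂_ζ̄ K_nm̄ = 0, and ∂_u(∂_ζ̄² K_m̄m̄) = 0; (ii) if g₀, g₁ : U → ℂ are smooth with ∂_u g₀ = K_m̄m̄, ∂_u g₁ −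 ∂_ζ̄ g₀ = 2 K_nm̄, and ∂_ζ̄ g₁ = −((1/2)K_nn + i η), then ∂_u³ g₀ = 0, ∂_ζ̄ ∂_u² g₀ = 0, and ∂_u³ g₁ = 0. -/

import Mathlib

/- Coordinates (u,v,x,y) = indices (0,1,2,3) on ℝ⁴;
   ζ = (x+iy)/√2, ∂_ζ = (∂_x − i∂_y)/√2, ∂_ζ̄ = (∂_x + i∂_y)/√2. -/

noncomputable section

abbrev V4 : Type := Fin 4 → ℝ

/-- Partial derivative of a complex-valued function in coordinate direction `i`. -/
def pdC (i : Fin 4) (f : V4 → ℂ) : V4 → ℂ :=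
  fun x => fderiv ℝ f x (Pi.single i 1)

/-- Partial derivative of a real-valued function in coordinate direction `i`. -/
def pdR (i : Fin 4) (f : V4 → ℝ) : V4 → ℝ :=
  fun x => fderiv ℝ f x (Pi.single i 1)

/-- Wirtinger derivative ∂_ζ = (∂_x - i ∂_y)/√2. -/
def pdZ (f : V4 → ℂ) : V4 → ℂ :=
  fun x => (pdC 2 f x - Complex.I * pdC 3 f x) / (Real.sqrt 2 : ℂ)

/-- Wirtinger derivative ∂_ζ̄ = (∂_x + i ∂_y)/√2. -/
def pdZb (f : V4 → ℂ) : V4 → ℂ :=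
  fun x => (pdC 2 f x + Complex.I * pdC 3 f x) / (Real.sqrt 2 : ℂ)

/-- The coordinate function ζ = (x+iy)/√2. -/
def zeta (x : V4) : ℂ := ((x 2 : ℂ) + Complex.I * (x 3 : ℂ)) / (Real.sqrt 2 : ℂ)

/-- The coordinate function ζ̄ = (x−iy)/√2. -/
def zbar (x : V4) : ℂ := ((x 2 : ℂ) - Complex.I * (x 3 : ℂ)) / (Real.sqrt 2 : ℂ)

/-- Gauge-operator component K_m̄m̄ = −2∂_ζ ξ_m̄. -/
def Kmm (ξm : V4 → ℂ) : V4 → ℂ :=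
  fun x => -2 * pdZ (fun y => (starRingEnd ℂ) (ξm y)) x

/-- Gauge-operator component
K_nm̄ = (∂_v − (H/2)∂_u)ξ_m̄ + (1/2)(∂_ζ H)ξ_ℓ − ∂_ζ ξ_n. -/
def Knm (H : V4 → ℝ) (ξl ξn : V4 → ℝ) (ξm : V4 → ℂ) : V4 → ℂ :=
  fun x => pdC 1 (fun y => (starRingEnd ℂ) (ξm y)) x
    - ((H x : ℂ) / 2) * pdC 0 (fun y => (starRingEnd ℂ) (ξm y)) x
    + (1/2) * pdZ (fun y => (H y : ℂ)) x * (ξl x : ℂ)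
    - pdZ (fun y => (ξn y : ℂ)) x

/-- Gauge-operator component
K_nn = 2(∂_v − (H/2)∂_u)ξ_n + (∂_ζ H)ξ_m + (∂_ζ̄ H)ξ_m̄. -/
def Knn (H : V4 → ℝ) (ξl ξn : V4 → ℝ) (ξm : V4 → ℂ) : V4 → ℂ :=
  fun x => 2 * (pdC 1 (fun y => (ξn y : ℂ)) x
      - ((H x : ℂ) / 2) * pdC 0 (fun y => (ξn y : ℂ)) x)
    + pdZ (fun y => (H y : ℂ)) x * ξm x
    + pdZb (fun y => (H y : ℂ)) x * (starRingEnd ℂ) (ξm x)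

/-- The auxiliary scalar η = (i/2)·u²·∂_ζ̄² K_m̄m̄. -/
def etaK (ξm : V4 → ℂ) : V4 → ℂ :=
  fun x => (Complex.I / 2) * ((x 0 : ℂ))^2 * pdZb (pdZb (Kmm ξm)) x


variable {U : Set V4}

/-- Abbreviation for smoothness on U. -/
def Sm (U : Set V4) (f : V4 → ℂ) : Prop := ContDiffOn ℝ (⊤ : ℕ∞) f U

namespace Tool

theorem sm_diff (hU : IsOpen U) {f : V4 → ℂ} (hf : Sm U f) {x : V4} (hx : x ∈ U) :
    DifferentiableAt ℝ f x :=
  (hf.contDiffAt (hU.mem_nhds hx)).differentiableAt (by simp)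

theorem pdC_congr (hU : IsOpen U) {f g : V4 → ℂ} (h : ∀ y ∈ U, f y = g y) {x : V4}
    (hx : x ∈ U) (i : Fin 4) : pdC i f x = pdC i g x := by
  have : f =ᶠ[nhds x] g := Filter.eventuallyEq_of_mem (hU.mem_nhds hx) h
  simp only [pdC, this.fderiv_eq]

theorem pdC_const (i : Fin 4) (c : ℂ) (x : V4) : pdC i (fun _ => c) x = 0 := by
  simp [pdC]

theorem pdC_add {f g : V4 → ℂ} {x : V4} (hf : DifferentiableAt ℝ f x)
    (hg : DifferentiableAt ℝ g x) (i : Fin 4) :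
    pdC i (fun y => f y + g y) x = pdC i f x + pdC i g x := by
  simp [pdC, fderiv_fun_add hf hg]

theorem pdC_sub {f g : V4 → ℂ} {x : V4} (hf : DifferentiableAt ℝ f x)
    (hg : DifferentiableAt ℝ g x) (i : Fin 4) :
    pdC i (fun y => f y - g y) x = pdC i f x - pdC i g x := by
  simp [pdC, fderiv_fun_sub hf hg]

theorem pdC_neg {f : V4 → ℂ} {x : V4} (i : Fin 4) :
    pdC i (fun y => -(f y)) x = -(pdC i f x) := by
  simp [pdC, fderiv_neg]

theorem pdC_const_mul {f : V4 → ℂ} {x : V4} (hf : DifferentiableAt ℝ f x) (c : ℂ) (i : Fin 4) :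
    pdC i (fun y => c * f y) x = c * pdC i f x := by
  simp [pdC, fderiv_const_mul hf c]

theorem pdC_mul {f g : V4 → ℂ} {x : V4} (hf : DifferentiableAt ℝ f x)
    (hg : DifferentiableAt ℝ g x) (i : Fin 4) :
    pdC i (fun y => f y * g y) x = pdC i f x * g x + f x * pdC i g x := by
  simp [pdC, fderiv_fun_mul hf hg, smul_eq_mul]; ring

theorem pdC_div_const {f : V4 → ℂ} {x : V4} (hf : DifferentiableAt ℝ f x) (c : ℂ) (i : Fin 4) :
    pdC i (fun y => f y / c) x = pdC i f x / c := by
  simp only [div_eq_mul_inv, pdC, fderiv_mul_const hf c⁻¹]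
  simp [mul_comm]

theorem pdC_ofReal {f : V4 → ℝ} {x : V4} (hf : DifferentiableAt ℝ f x) (i : Fin 4) :
    pdC i (fun y => (f y : ℂ)) x = (pdR i f x : ℂ) := by
  have h : HasFDerivAt (fun y => ((f y : ℝ) : ℂ)) (Complex.ofRealCLM.comp (fderiv ℝ f x)) x :=
    Complex.ofRealCLM.hasFDerivAt.comp x hf.hasFDerivAt
  simp only [pdC, pdR, h.fderiv]
  simp

theorem pdC_conj {f : V4 → ℂ} {x : V4} (hf : DifferentiableAt ℝ f x) (i : Fin 4) :
    pdC i (fun y => (starRingEnd ℂ) (f y)) x = (starRingEnd ℂ) (pdC i f x) := by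
  have h : HasFDerivAt (fun y => (starRingEnd ℂ) (f y))
      ((Complex.conjCLE.toContinuousLinearMap).comp (fderiv ℝ f x)) x :=
    (Complex.conjCLE.toContinuousLinearMap).hasFDerivAt.comp x hf.hasFDerivAt
  simp only [pdC, h.fderiv]
  simp


theorem sm_fderiv (hU : IsOpen U) {f : V4 → ℂ} (hf : Sm U f) :
    ContDiffOn ℝ (⊤ : ℕ∞) (fderiv ℝ f) U :=
  hf.fderiv_of_isOpen hU (by exact_mod_cast le_top)

theorem sm_pdC (hU : IsOpen U) {f : V4 → ℂ} (hf : Sm U f) (i : Fin 4) :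
    Sm U (pdC i f) :=
  (sm_fderiv hU hf).clm_apply contDiffOn_const

theorem sm_add {f g : V4 → ℂ} (hf : Sm U f) (hg : Sm U g) :
    Sm U (fun y => f y + g y) := hf.add hg

theorem sm_sub {f g : V4 → ℂ} (hf : Sm U f) (hg : Sm U g) :
    Sm U (fun y => f y - g y) := hf.sub hg

theorem sm_mul {f g : V4 → ℂ} (hf : Sm U f) (hg : Sm U g) :
    Sm U (fun y => f y * g y) := hf.mul hg

theorem sm_const {c : ℂ} : Sm U (fun _ => c) := contDiffOn_const

theorem sm_const_mul {f : V4 → ℂ} (hf : Sm U f) (c : ℂ) :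
    Sm U (fun y => c * f y) := sm_mul sm_const hf

theorem sm_div_const {f : V4 → ℂ} (hf : Sm U f) (c : ℂ) :
    Sm U (fun y => f y / c) := by
  simpa [div_eq_mul_inv] using sm_mul hf (sm_const (c := c⁻¹))

theorem sm_ofReal {f : V4 → ℝ} (hf : ContDiffOn ℝ (⊤ : ℕ∞) f U) :
    Sm U (fun y => (f y : ℂ)) :=
  Complex.ofRealCLM.contDiff.comp_contDiffOn hf

theorem sm_conj {f : V4 → ℂ} (hf : Sm U f) :
    Sm U (fun y => (starRingEnd ℂ) (f y)) :=
  (Complex.conjCLE.toContinuousLinearMap).contDiff.comp_contDiffOn hf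

theorem sm_pdZ (hU : IsOpen U) {f : V4 → ℂ} (hf : Sm U f) : Sm U (pdZ f) := by
  unfold pdZ
  exact sm_div_const (sm_sub (sm_pdC hU hf 2) (sm_const_mul (sm_pdC hU hf 3) Complex.I)) _

theorem sm_pdZb (hU : IsOpen U) {f : V4 → ℂ} (hf : Sm U f) : Sm U (pdZb f) := by
  unfold pdZb
  exact sm_div_const (sm_add (sm_pdC hU hf 2) (sm_const_mul (sm_pdC hU hf 3) Complex.I)) _

theorem pdC_swap (hU : IsOpen U) {f : V4 → ℂ} (hf : Sm U f) {x : V4} (hx : x ∈ U)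
    (i j : Fin 4) : pdC i (pdC j f) x = pdC j (pdC i f) x := by
  have hd : DifferentiableAt ℝ (fderiv ℝ f) x :=
    ((sm_fderiv hU hf).contDiffAt (hU.mem_nhds hx)).differentiableAt
      (by simp)
  have key : ∀ v w : V4, pdC ⟨0,by norm_num⟩ f x = pdC ⟨0,by norm_num⟩ f x := fun _ _ => rfl
  have h1 : ∀ k : Fin 4, ∀ v : V4,
      fderiv ℝ (fun y => (fderiv ℝ f y) (Pi.single k 1)) x v
        = fderiv ℝ (fderiv ℝ f) x v (Pi.single k 1) := by
    intro k v
    rw [fderiv_clm_apply hd (differentiableAt_const _)]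
    simp
  have hsym := (hf.contDiffAt (hU.mem_nhds hx)).isSymmSndFDerivAt
    (by
      rw [show ((2:WithTop ℕ∞)) = ((2:ℕ∞) : WithTop ℕ∞) by rfl]
      rw [minSmoothness_of_isRCLikeNormedField]
      exact_mod_cast (le_top : (2:ℕ∞) ≤ ⊤))
  show fderiv ℝ (fun y => (fderiv ℝ f y) (Pi.single j 1)) x (Pi.single i 1)
      = fderiv ℝ (fun y => (fderiv ℝ f y) (Pi.single i 1)) x (Pi.single j 1)
  rw [h1, h1, hsym]


theorem pdZ_congr (hU : IsOpen U) {f g : V4 → ℂ} (h : ∀ y ∈ U, f y = g y) {x : V4}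
    (hx : x ∈ U) : pdZ f x = pdZ g x := by
  unfold pdZ; rw [pdC_congr hU h hx 2, pdC_congr hU h hx 3]

theorem pdZb_congr (hU : IsOpen U) {f g : V4 → ℂ} (h : ∀ y ∈ U, f y = g y) {x : V4}
    (hx : x ∈ U) : pdZb f x = pdZb g x := by
  unfold pdZb; rw [pdC_congr hU h hx 2, pdC_congr hU h hx 3]

theorem pdC_zero_of (hU : IsOpen U) {f : V4 → ℂ} (h : ∀ y ∈ U, f y = 0) {x : V4}
    (hx : x ∈ U) (i : Fin 4) : pdC i f x = 0 := by
  rw [pdC_congr hU (g := fun _ => (0:ℂ)) h hx i, pdC_const]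

theorem pdZ_zero_of (hU : IsOpen U) {f : V4 → ℂ} (h : ∀ y ∈ U, f y = 0) {x : V4}
    (hx : x ∈ U) : pdZ f x = 0 := by
  unfold pdZ; rw [pdC_zero_of hU h hx 2, pdC_zero_of hU h hx 3]; simp

theorem pdZb_zero_of (hU : IsOpen U) {f : V4 → ℂ} (h : ∀ y ∈ U, f y = 0) {x : V4}
    (hx : x ∈ U) : pdZb f x = 0 := by
  unfold pdZb; rw [pdC_zero_of hU h hx 2, pdC_zero_of hU h hx 3]; simp

theorem pdZ_neg {f : V4 → ℂ} {x : V4} :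
    pdZ (fun y => -(f y)) x = -(pdZ f x) := by
  unfold pdZ; rw [pdC_neg, pdC_neg]; ring

theorem pdZ_const_mul {f : V4 → ℂ} {x : V4} (hf : DifferentiableAt ℝ f x) (c : ℂ) :
    pdZ (fun y => c * f y) x = c * pdZ f x := by
  unfold pdZ; rw [pdC_const_mul hf c 2, pdC_const_mul hf c 3]; ring

theorem pdZb_const_mul {f : V4 → ℂ} {x : V4} (hf : DifferentiableAt ℝ f x) (c : ℂ) :
    pdZb (fun y => c * f y) x = c * pdZb f x := by
  unfold pdZb; rw [pdC_const_mul hf c 2, pdC_const_mul hf c 3]; ring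

theorem pdC_pdZ_swap (hU : IsOpen U) {f : V4 → ℂ} (hf : Sm U f) {x : V4} (hx : x ∈ U)
    (i : Fin 4) : pdC i (pdZ f) x = pdZ (pdC i f) x := by
  have d2 : DifferentiableAt ℝ (pdC 2 f) x := sm_diff hU (sm_pdC hU hf 2) hx
  have d3 : DifferentiableAt ℝ (pdC 3 f) x := sm_diff hU (sm_pdC hU hf 3) hx
  unfold pdZ
  rw [pdC_div_const (f := fun y => pdC 2 f y - Complex.I * pdC 3 f y)
    (d2.sub (d3.const_mul Complex.I)) _ i,
    pdC_sub d2 (d3.const_mul Complex.I) i, pdC_const_mul d3 Complex.I i,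
    pdC_swap hU hf hx i 2, pdC_swap hU hf hx i 3]

theorem pdC_pdZb_swap (hU : IsOpen U) {f : V4 → ℂ} (hf : Sm U f) {x : V4} (hx : x ∈ U)
    (i : Fin 4) : pdC i (pdZb f) x = pdZb (pdC i f) x := by
  have d2 : DifferentiableAt ℝ (pdC 2 f) x := sm_diff hU (sm_pdC hU hf 2) hx
  have d3 : DifferentiableAt ℝ (pdC 3 f) x := sm_diff hU (sm_pdC hU hf 3) hx
  unfold pdZb
  rw [pdC_div_const (f := fun y => pdC 2 f y + Complex.I * pdC 3 f y)
    (d2.add (d3.const_mul Complex.I)) _ i,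
    pdC_add d2 (d3.const_mul Complex.I) i, pdC_const_mul d3 Complex.I i,
    pdC_swap hU hf hx i 2, pdC_swap hU hf hx i 3]

theorem pdZ_pdZb_swap (hU : IsOpen U) {f : V4 → ℂ} (hf : Sm U f) {x : V4} (hx : x ∈ U) :
    pdZ (pdZb f) x = pdZb (pdZ f) x := by
  have h2 : pdC 2 (pdZb f) x = pdZb (pdC 2 f) x := pdC_pdZb_swap hU hf hx 2
  have h3 : pdC 3 (pdZb f) x = pdZb (pdC 3 f) x := pdC_pdZb_swap hU hf hx 3
  have h2' : pdC 2 (pdZ f) x = pdZ (pdC 2 f) x := pdC_pdZ_swap hU hf hx 2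
  have h3' : pdC 3 (pdZ f) x = pdZ (pdC 3 f) x := pdC_pdZ_swap hU hf hx 3
  have hsw : pdC 2 (pdC 3 f) x = pdC 3 (pdC 2 f) x := pdC_swap hU hf hx 2 3
  show (pdC 2 (pdZb f) x - Complex.I * pdC 3 (pdZb f) x) / _
      = (pdC 2 (pdZ f) x + Complex.I * pdC 3 (pdZ f) x) / _
  rw [h2, h3, h2', h3']
  show (pdZb (pdC 2 f) x - Complex.I * pdZb (pdC 3 f) x) / _ = _
  unfold pdZ pdZb
  rw [hsw]
  ring

end Tool


/-- Structure of the gauge-operator components of a residual radiation-gauge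
vector on a pp-wave, and the resulting constraints on its spinor potential
(g₀, g₁). -/
theorem stmt17 (U : Set V4) (hUopen : IsOpen U) (hUconv : Convex ℝ U)
    (H : V4 → ℝ) (hH : ContDiffOn ℝ (⊤ : ℕ∞) H U)
    (hHu : ∀ x ∈ U, pdR 0 H x = 0)
    (ξl ξn : V4 → ℝ) (ξm : V4 → ℂ)
    (hl : ContDiffOn ℝ (⊤ : ℕ∞) ξl U) (hn : ContDiffOn ℝ (⊤ : ℕ∞) ξn U)
    (hm : ContDiffOn ℝ (⊤ : ℕ∞) ξm U)
    (e1 : ∀ x ∈ U, pdR 0 ξl x = 0)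
    (e2 : ∀ x ∈ U, pdC 0 (fun y => (starRingEnd ℂ) (ξm y)) x
      = pdZ (fun y => (ξl y : ℂ)) x)
    (e3 : ∀ x ∈ U, pdC 0 ξm x = pdZb (fun y => (ξl y : ℂ)) x)
    (e4 : ∀ x ∈ U, pdR 0 ξn x = -(pdR 1 ξl x))
    (e5 : ∀ x ∈ U, pdZb (fun y => (starRingEnd ℂ) (ξm y)) x + pdZ ξm x = 0) :
    ((∀ x ∈ U, pdC 0 (pdC 0 (Knn H ξl ξn ξm)) x = 0) ∧
     (∀ x ∈ U, pdC 0 (pdZb (Knm H ξl ξn ξm)) x = 0) ∧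
     (∀ x ∈ U, pdC 0 (pdZb (pdZb (Kmm ξm))) x = 0)) ∧
    (∀ g0 g1 : V4 → ℂ,
      ContDiffOn ℝ (⊤ : ℕ∞) g0 U → ContDiffOn ℝ (⊤ : ℕ∞) g1 U →
      (∀ x ∈ U, pdC 0 g0 x = Kmm ξm x) →
      (∀ x ∈ U, pdC 0 g1 x - pdZb g0 x = 2 * Knm H ξl ξn ξm x) →
      (∀ x ∈ U, pdZb g1 x = -((1/2) * Knn H ξl ξn ξm x + Complex.I * etaK ξm x)) →
      (∀ x ∈ U, pdC 0 (pdC 0 (pdC 0 g0)) x = 0) ∧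
      (∀ x ∈ U, pdZb (pdC 0 (pdC 0 g0)) x = 0) ∧
      (∀ x ∈ U, pdC 0 (pdC 0 (pdC 0 g1)) x = 0)) := by

  classical
  have hU := hUopen
  -- real differentiability
  have dRl : ∀ x ∈ U, DifferentiableAt ℝ ξl x := fun x hx =>
    (hl.contDiffAt (hU.mem_nhds hx)).differentiableAt (by simp)
  have dRn : ∀ x ∈ U, DifferentiableAt ℝ ξn x := fun x hx =>
    (hn.contDiffAt (hU.mem_nhds hx)).differentiableAt (by simp)
  have dRH : ∀ x ∈ U, DifferentiableAt ℝ H x := fun x hx =>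
    (hH.contDiffAt (hU.mem_nhds hx)).differentiableAt (by simp)
  -- smoothness of complexified functions
  have hL : Sm U (fun y => ((ξl y : ℝ) : ℂ)) := Tool.sm_ofReal hl
  have hN : Sm U (fun y => ((ξn y : ℝ) : ℂ)) := Tool.sm_ofReal hn
  have hHc : Sm U (fun y => ((H y : ℝ) : ℂ)) := Tool.sm_ofReal hH
  have hMb : Sm U (fun y => (starRingEnd ℂ) (ξm y)) := Tool.sm_conj hm
  -- basic derivative facts
  have hDL : ∀ x ∈ U, pdC 0 (fun y => ((ξl y : ℝ) : ℂ)) x = 0 := by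
    intro x hx
    rw [Tool.pdC_ofReal (dRl x hx) 0, e1 x hx]
    simp
  have hDHc : ∀ x ∈ U, pdC 0 (fun y => ((H y : ℝ) : ℂ)) x = 0 := by
    intro x hx
    rw [Tool.pdC_ofReal (dRH x hx) 0, hHu x hx]
    simp
  have hDN : ∀ x ∈ U, pdC 0 (fun y => ((ξn y : ℝ) : ℂ)) x = -(pdC 1 (fun y => ((ξl y : ℝ) : ℂ)) x) := by
    intro x hx
    rw [Tool.pdC_ofReal (dRn x hx) 0, e4 x hx, Tool.pdC_ofReal (dRl x hx) 1]
    push_cast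
    ring
  -- harmonicity of ξl in (x,y)
  have hzz : ∀ x ∈ U, pdZb (pdZ (fun y => ((ξl y : ℝ) : ℂ))) x = 0 := by
    intro x hx
    have h0 : pdC 0 (fun y => pdZb (fun y => (starRingEnd ℂ) (ξm y)) y + pdZ ξm y) x = 0 :=
      Tool.pdC_zero_of hU (fun y hy => e5 y hy) hx 0
    rw [Tool.pdC_add (Tool.sm_diff hU (Tool.sm_pdZb hU hMb) hx)
        (Tool.sm_diff hU (Tool.sm_pdZ hU hm) hx) 0,
      Tool.pdC_pdZb_swap hU hMb hx 0, Tool.pdC_pdZ_swap hU hm hx 0,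
      Tool.pdZb_congr hU e2 hx, Tool.pdZ_congr hU e3 hx,
      Tool.pdZ_pdZb_swap hU hL hx] at h0
    linear_combination h0 / 2
  have h3z : ∀ x ∈ U, pdZb (pdZ (pdZ (fun y => ((ξl y : ℝ) : ℂ)))) x = 0 := by
    intro x hx
    rw [← Tool.pdZ_pdZb_swap hU (Tool.sm_pdZ hU hL) hx]
    exact Tool.pdZ_zero_of hU hzz hx
  have hD0pdZL : ∀ x ∈ U, pdC 0 (pdZ (fun y => ((ξl y : ℝ) : ℂ))) x = 0 := by
    intro x hx
    rw [Tool.pdC_pdZ_swap hU hL hx 0]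
    exact Tool.pdZ_zero_of hU hDL hx
  have hD0pdZbL : ∀ x ∈ U, pdC 0 (pdZb (fun y => ((ξl y : ℝ) : ℂ))) x = 0 := by
    intro x hx
    rw [Tool.pdC_pdZb_swap hU hL hx 0]
    exact Tool.pdZb_zero_of hU hDL hx
  have hD0pdZHc : ∀ x ∈ U, pdC 0 (pdZ (fun y => ((H y : ℝ) : ℂ))) x = 0 := by
    intro x hx
    rw [Tool.pdC_pdZ_swap hU hHc hx 0]
    exact Tool.pdZ_zero_of hU hDHc hx
  have hD0pdZbHc : ∀ x ∈ U, pdC 0 (pdZb (fun y => ((H y : ℝ) : ℂ))) x = 0 := by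
    intro x hx
    rw [Tool.pdC_pdZb_swap hU hHc hx 0]
    exact Tool.pdZb_zero_of hU hDHc hx
  have hD01L : ∀ y ∈ U, pdC 0 (pdC 1 (fun y => ((ξl y : ℝ) : ℂ))) y = 0 := by
    intro y hy
    rw [Tool.pdC_swap hU hL hy 0 1]
    exact Tool.pdC_zero_of hU hDL hy 1
  -- smoothness of the gauge components
  have hKmmSm : Sm U (Kmm ξm) :=
    Tool.sm_const_mul (Tool.sm_pdZ hU hMb) (-2)
  have hKnmSm : Sm U (Knm H ξl ξn ξm) :=
    Tool.sm_sub (Tool.sm_add (Tool.sm_sub (Tool.sm_pdC hU hMb 1)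
      (Tool.sm_mul (Tool.sm_div_const hHc 2) (Tool.sm_pdC hU hMb 0)))
      (Tool.sm_mul (Tool.sm_const_mul (Tool.sm_pdZ hU hHc) (1/2)) hL))
      (Tool.sm_pdZ hU hN)
  have hKnnSm : Sm U (Knn H ξl ξn ξm) :=
    Tool.sm_add (Tool.sm_add
      (Tool.sm_const_mul (Tool.sm_sub (Tool.sm_pdC hU hN 1)
        (Tool.sm_mul (Tool.sm_div_const hHc 2) (Tool.sm_pdC hU hN 0))) 2)
      (Tool.sm_mul (Tool.sm_pdZ hU hHc) hm))
      (Tool.sm_mul (Tool.sm_pdZb hU hHc) hMb)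
  -- ∂_u K_m̄m̄ = −2 ∂_ζ² ξl
  have hD0Kmm : ∀ x ∈ U, pdC 0 (Kmm ξm) x = -2 * pdZ (pdZ (fun y => ((ξl y : ℝ) : ℂ))) x := by
    intro x hx
    have s1 : pdC 0 (Kmm ξm) x = -2 * pdC 0 (pdZ (fun y => (starRingEnd ℂ) (ξm y))) x :=
      Tool.pdC_const_mul (Tool.sm_diff hU (Tool.sm_pdZ hU hMb) hx) (-2) 0
    rw [s1, Tool.pdC_pdZ_swap hU hMb hx 0, Tool.pdZ_congr hU e2 hx]
  have hZbD0Kmm : ∀ x ∈ U, pdZb (pdC 0 (Kmm ξm)) x = 0 := by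
    intro x hx
    rw [Tool.pdZb_congr hU hD0Kmm hx,
      Tool.pdZb_const_mul (Tool.sm_diff hU (Tool.sm_pdZ hU (Tool.sm_pdZ hU hL)) hx) (-2),
      h3z x hx, mul_zero]
  -- ∂_u K_nm̄ = 2 ∂_ζ ∂_v ξl
  have hD0Knm : ∀ x ∈ U, pdC 0 (Knm H ξl ξn ξm) x = 2 * pdZ (pdC 1 (fun y => ((ξl y : ℝ) : ℂ))) x := by
    intro x hx
    have dMb0 : DifferentiableAt ℝ (pdC 0 (fun y => (starRingEnd ℂ) (ξm y))) x := Tool.sm_diff hU (Tool.sm_pdC hU hMb 0) hx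
    have dMb1 : DifferentiableAt ℝ (pdC 1 (fun y => (starRingEnd ℂ) (ξm y))) x := Tool.sm_diff hU (Tool.sm_pdC hU hMb 1) hx
    have dHc : DifferentiableAt ℝ (fun y => ((H y : ℝ) : ℂ)) x := Tool.sm_diff hU hHc hx
    have dH2 : DifferentiableAt ℝ (fun y => ((H y : ℝ) : ℂ) / 2) x := by
      simpa only [div_eq_mul_inv] using dHc.mul_const ((2:ℂ)⁻¹)
    have dZHc : DifferentiableAt ℝ (pdZ (fun y => ((H y : ℝ) : ℂ))) x := Tool.sm_diff hU (Tool.sm_pdZ hU hHc) hx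
    have dZHc2 : DifferentiableAt ℝ (fun y => (1/2 : ℂ) * pdZ (fun y => ((H y : ℝ) : ℂ)) y) x := dZHc.const_mul _
    have dL : DifferentiableAt ℝ (fun y => ((ξl y : ℝ) : ℂ)) x := Tool.sm_diff hU hL hx
    have dZN : DifferentiableAt ℝ (pdZ (fun y => ((ξn y : ℝ) : ℂ))) x := Tool.sm_diff hU (Tool.sm_pdZ hU hN) hx
    have dT2 : DifferentiableAt ℝ (fun y => ((H y : ℝ) : ℂ) / 2 * pdC 0 (fun y => (starRingEnd ℂ) (ξm y)) y) x := dH2.mul dMb0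
    have dT3 : DifferentiableAt ℝ (fun y => (1/2 : ℂ) * pdZ (fun y => ((H y : ℝ) : ℂ)) y * ((ξl y : ℝ) : ℂ)) x :=
      dZHc2.mul dL
    have dT12 : DifferentiableAt ℝ
        (fun y => pdC 1 (fun y => (starRingEnd ℂ) (ξm y)) y - ((H y : ℝ) : ℂ) / 2 * pdC 0 (fun y => (starRingEnd ℂ) (ξm y)) y) x := dMb1.sub dT2
    have s1 : pdC 0 (Knm H ξl ξn ξm) x
        = pdC 0 (fun y => pdC 1 (fun y => (starRingEnd ℂ) (ξm y)) y - ((H y : ℝ) : ℂ) / 2 * pdC 0 (fun y => (starRingEnd ℂ) (ξm y)) y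
            + (1/2 : ℂ) * pdZ (fun y => ((H y : ℝ) : ℂ)) y * ((ξl y : ℝ) : ℂ)) x
          - pdC 0 (pdZ (fun y => ((ξn y : ℝ) : ℂ))) x := Tool.pdC_sub (dT12.add dT3) dZN 0
    have s2 : pdC 0 (fun y => pdC 1 (fun y => (starRingEnd ℂ) (ξm y)) y - ((H y : ℝ) : ℂ) / 2 * pdC 0 (fun y => (starRingEnd ℂ) (ξm y)) y
            + (1/2 : ℂ) * pdZ (fun y => ((H y : ℝ) : ℂ)) y * ((ξl y : ℝ) : ℂ)) x
        = pdC 0 (fun y => pdC 1 (fun y => (starRingEnd ℂ) (ξm y)) y - ((H y : ℝ) : ℂ) / 2 * pdC 0 (fun y => (starRingEnd ℂ) (ξm y)) y) x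
          + pdC 0 (fun y => (1/2 : ℂ) * pdZ (fun y => ((H y : ℝ) : ℂ)) y * ((ξl y : ℝ) : ℂ)) x :=
      Tool.pdC_add dT12 dT3 0
    have s3 : pdC 0 (fun y => pdC 1 (fun y => (starRingEnd ℂ) (ξm y)) y - ((H y : ℝ) : ℂ) / 2 * pdC 0 (fun y => (starRingEnd ℂ) (ξm y)) y) x
        = pdC 0 (pdC 1 (fun y => (starRingEnd ℂ) (ξm y))) x
          - pdC 0 (fun y => ((H y : ℝ) : ℂ) / 2 * pdC 0 (fun y => (starRingEnd ℂ) (ξm y)) y) x :=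
      Tool.pdC_sub dMb1 dT2 0
    have s4 : pdC 0 (fun y => ((H y : ℝ) : ℂ) / 2 * pdC 0 (fun y => (starRingEnd ℂ) (ξm y)) y) x
        = pdC 0 (fun y => ((H y : ℝ) : ℂ) / 2) x * pdC 0 (fun y => (starRingEnd ℂ) (ξm y)) x
          + ((H x : ℝ) : ℂ) / 2 * pdC 0 (pdC 0 (fun y => (starRingEnd ℂ) (ξm y))) x := Tool.pdC_mul dH2 dMb0 0
    have s5 : pdC 0 (fun y => ((H y : ℝ) : ℂ) / 2) x = pdC 0 (fun y => ((H y : ℝ) : ℂ)) x / 2 :=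
      Tool.pdC_div_const dHc 2 0
    have s7 : pdC 0 (pdC 0 (fun y => (starRingEnd ℂ) (ξm y))) x = 0 := by
      rw [Tool.pdC_congr hU e2 hx 0]
      exact hD0pdZL x hx
    have s8 : pdC 0 (pdC 1 (fun y => (starRingEnd ℂ) (ξm y))) x = pdZ (pdC 1 (fun y => ((ξl y : ℝ) : ℂ))) x := by
      rw [Tool.pdC_swap hU hMb hx 0 1, Tool.pdC_congr hU e2 hx 1,
        Tool.pdC_pdZ_swap hU hL hx 1]
    have s9 : pdC 0 (fun y => (1/2 : ℂ) * pdZ (fun y => ((H y : ℝ) : ℂ)) y * ((ξl y : ℝ) : ℂ)) x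
        = pdC 0 (fun y => (1/2 : ℂ) * pdZ (fun y => ((H y : ℝ) : ℂ)) y) x * ((ξl x : ℝ) : ℂ)
          + (1/2 : ℂ) * pdZ (fun y => ((H y : ℝ) : ℂ)) x * pdC 0 (fun y => ((ξl y : ℝ) : ℂ)) x := Tool.pdC_mul dZHc2 dL 0
    have s10 : pdC 0 (fun y => (1/2 : ℂ) * pdZ (fun y => ((H y : ℝ) : ℂ)) y) x = (1/2 : ℂ) * pdC 0 (pdZ (fun y => ((H y : ℝ) : ℂ))) x :=
      Tool.pdC_const_mul dZHc (1/2) 0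
    have s13 : pdC 0 (pdZ (fun y => ((ξn y : ℝ) : ℂ))) x = -(pdZ (pdC 1 (fun y => ((ξl y : ℝ) : ℂ))) x) := by
      rw [Tool.pdC_pdZ_swap hU hN hx 0, Tool.pdZ_congr hU hDN hx]
      exact Tool.pdZ_neg
    rw [s1, s2, s3, s4, s5, hDHc x hx, s7, s8, s9, s10, hD0pdZHc x hx, hDL x hx, s13]
    ring
  -- ∂_u K_nn
  have hD0Knn : ∀ x ∈ U, pdC 0 (Knn H ξl ξn ξm) x
      = -2 * pdC 1 (pdC 1 (fun y => ((ξl y : ℝ) : ℂ))) x + pdZ (fun y => ((H y : ℝ) : ℂ)) x * pdZb (fun y => ((ξl y : ℝ) : ℂ)) x + pdZb (fun y => ((H y : ℝ) : ℂ)) x * pdZ (fun y => ((ξl y : ℝ) : ℂ)) x := by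
    intro x hx
    have dN0 : DifferentiableAt ℝ (pdC 0 (fun y => ((ξn y : ℝ) : ℂ))) x := Tool.sm_diff hU (Tool.sm_pdC hU hN 0) hx
    have dN1 : DifferentiableAt ℝ (pdC 1 (fun y => ((ξn y : ℝ) : ℂ))) x := Tool.sm_diff hU (Tool.sm_pdC hU hN 1) hx
    have dHc : DifferentiableAt ℝ (fun y => ((H y : ℝ) : ℂ)) x := Tool.sm_diff hU hHc hx
    have dH2 : DifferentiableAt ℝ (fun y => ((H y : ℝ) : ℂ) / 2) x := by
      simpa only [div_eq_mul_inv] using dHc.mul_const ((2:ℂ)⁻¹)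
    have dZHc : DifferentiableAt ℝ (pdZ (fun y => ((H y : ℝ) : ℂ))) x := Tool.sm_diff hU (Tool.sm_pdZ hU hHc) hx
    have dZbHc : DifferentiableAt ℝ (pdZb (fun y => ((H y : ℝ) : ℂ))) x := Tool.sm_diff hU (Tool.sm_pdZb hU hHc) hx
    have dM : DifferentiableAt ℝ ξm x := Tool.sm_diff hU hm hx
    have dMbp : DifferentiableAt ℝ (fun y => (starRingEnd ℂ) (ξm y)) x := Tool.sm_diff hU hMb hx
    have dT : DifferentiableAt ℝ (fun y => ((H y : ℝ) : ℂ) / 2 * pdC 0 (fun y => ((ξn y : ℝ) : ℂ)) y) x := dH2.mul dN0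
    have dInner : DifferentiableAt ℝ
        (fun y => pdC 1 (fun y => ((ξn y : ℝ) : ℂ)) y - ((H y : ℝ) : ℂ) / 2 * pdC 0 (fun y => ((ξn y : ℝ) : ℂ)) y) x := dN1.sub dT
    have d2I : DifferentiableAt ℝ
        (fun y => 2 * (pdC 1 (fun y => ((ξn y : ℝ) : ℂ)) y - ((H y : ℝ) : ℂ) / 2 * pdC 0 (fun y => ((ξn y : ℝ) : ℂ)) y)) x := dInner.const_mul 2
    have dC : DifferentiableAt ℝ (fun y => pdZ (fun y => ((H y : ℝ) : ℂ)) y * ξm y) x := dZHc.mul dM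
    have dD : DifferentiableAt ℝ (fun y => pdZb (fun y => ((H y : ℝ) : ℂ)) y * (starRingEnd ℂ) (ξm y)) x :=
      dZbHc.mul dMbp
    have s1 : pdC 0 (Knn H ξl ξn ξm) x
        = pdC 0 (fun y => 2 * (pdC 1 (fun y => ((ξn y : ℝ) : ℂ)) y - ((H y : ℝ) : ℂ) / 2 * pdC 0 (fun y => ((ξn y : ℝ) : ℂ)) y)
            + pdZ (fun y => ((H y : ℝ) : ℂ)) y * ξm y) x
          + pdC 0 (fun y => pdZb (fun y => ((H y : ℝ) : ℂ)) y * (starRingEnd ℂ) (ξm y)) x :=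
      Tool.pdC_add (d2I.add dC) dD 0
    have s2 : pdC 0 (fun y => 2 * (pdC 1 (fun y => ((ξn y : ℝ) : ℂ)) y - ((H y : ℝ) : ℂ) / 2 * pdC 0 (fun y => ((ξn y : ℝ) : ℂ)) y)
            + pdZ (fun y => ((H y : ℝ) : ℂ)) y * ξm y) x
        = pdC 0 (fun y => 2 * (pdC 1 (fun y => ((ξn y : ℝ) : ℂ)) y - ((H y : ℝ) : ℂ) / 2 * pdC 0 (fun y => ((ξn y : ℝ) : ℂ)) y)) x
          + pdC 0 (fun y => pdZ (fun y => ((H y : ℝ) : ℂ)) y * ξm y) x := Tool.pdC_add d2I dC 0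
    have s3 : pdC 0 (fun y => 2 * (pdC 1 (fun y => ((ξn y : ℝ) : ℂ)) y - ((H y : ℝ) : ℂ) / 2 * pdC 0 (fun y => ((ξn y : ℝ) : ℂ)) y)) x
        = 2 * pdC 0 (fun y => pdC 1 (fun y => ((ξn y : ℝ) : ℂ)) y - ((H y : ℝ) : ℂ) / 2 * pdC 0 (fun y => ((ξn y : ℝ) : ℂ)) y) x :=
      Tool.pdC_const_mul dInner 2 0
    have s4 : pdC 0 (fun y => pdC 1 (fun y => ((ξn y : ℝ) : ℂ)) y - ((H y : ℝ) : ℂ) / 2 * pdC 0 (fun y => ((ξn y : ℝ) : ℂ)) y) x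
        = pdC 0 (pdC 1 (fun y => ((ξn y : ℝ) : ℂ))) x - pdC 0 (fun y => ((H y : ℝ) : ℂ) / 2 * pdC 0 (fun y => ((ξn y : ℝ) : ℂ)) y) x :=
      Tool.pdC_sub dN1 dT 0
    have s5 : pdC 0 (pdC 1 (fun y => ((ξn y : ℝ) : ℂ))) x = -(pdC 1 (pdC 1 (fun y => ((ξl y : ℝ) : ℂ))) x) := by
      rw [Tool.pdC_swap hU hN hx 0 1, Tool.pdC_congr hU hDN hx 1, Tool.pdC_neg]
    have s6 : pdC 0 (fun y => ((H y : ℝ) : ℂ) / 2 * pdC 0 (fun y => ((ξn y : ℝ) : ℂ)) y) x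
        = pdC 0 (fun y => ((H y : ℝ) : ℂ) / 2) x * pdC 0 (fun y => ((ξn y : ℝ) : ℂ)) x
          + ((H x : ℝ) : ℂ) / 2 * pdC 0 (pdC 0 (fun y => ((ξn y : ℝ) : ℂ))) x := Tool.pdC_mul dH2 dN0 0
    have s6' : pdC 0 (fun y => ((H y : ℝ) : ℂ) / 2) x = pdC 0 (fun y => ((H y : ℝ) : ℂ)) x / 2 :=
      Tool.pdC_div_const dHc 2 0
    have s7 : pdC 0 (pdC 0 (fun y => ((ξn y : ℝ) : ℂ))) x = 0 := by
      rw [Tool.pdC_congr hU hDN hx 0, Tool.pdC_neg, Tool.pdC_swap hU hL hx 0 1,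
        Tool.pdC_zero_of hU hDL hx 1, neg_zero]
    have s8 : pdC 0 (fun y => pdZ (fun y => ((H y : ℝ) : ℂ)) y * ξm y) x
        = pdC 0 (pdZ (fun y => ((H y : ℝ) : ℂ))) x * ξm x + pdZ (fun y => ((H y : ℝ) : ℂ)) x * pdC 0 ξm x := Tool.pdC_mul dZHc dM 0
    have s10 : pdC 0 (fun y => pdZb (fun y => ((H y : ℝ) : ℂ)) y * (starRingEnd ℂ) (ξm y)) x
        = pdC 0 (pdZb (fun y => ((H y : ℝ) : ℂ))) x * (starRingEnd ℂ) (ξm x) + pdZb (fun y => ((H y : ℝ) : ℂ)) x * pdC 0 (fun y => (starRingEnd ℂ) (ξm y)) x :=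
      Tool.pdC_mul dZbHc dMbp 0
    rw [s1, s2, s3, s4, s5, s6, s6', hDHc x hx, s7, s8, hD0pdZHc x hx, e3 x hx, s10,
      hD0pdZbHc x hx, e2 x hx]
    ring
  -- target (i).1 :  ∂_u² K_nn = 0
  have tA1 : ∀ x ∈ U, pdC 0 (pdC 0 (Knn H ξl ξn ξm)) x = 0 := by
    intro x hx
    have h1 : pdC 0 (pdC 0 (Knn H ξl ξn ξm)) x
        = pdC 0 (fun y => -2 * pdC 1 (pdC 1 (fun y => ((ξl y : ℝ) : ℂ))) y + pdZ (fun y => ((H y : ℝ) : ℂ)) y * pdZb (fun y => ((ξl y : ℝ) : ℂ)) y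
            + pdZb (fun y => ((H y : ℝ) : ℂ)) y * pdZ (fun y => ((ξl y : ℝ) : ℂ)) y) x := Tool.pdC_congr hU hD0Knn hx 0
    have dPP : DifferentiableAt ℝ (pdC 1 (pdC 1 (fun y => ((ξl y : ℝ) : ℂ)))) x :=
      Tool.sm_diff hU (Tool.sm_pdC hU (Tool.sm_pdC hU hL 1) 1) hx
    have dA : DifferentiableAt ℝ (fun y => (-2 : ℂ) * pdC 1 (pdC 1 (fun y => ((ξl y : ℝ) : ℂ))) y) x :=
      dPP.const_mul _
    have dZHc : DifferentiableAt ℝ (pdZ (fun y => ((H y : ℝ) : ℂ))) x := Tool.sm_diff hU (Tool.sm_pdZ hU hHc) hx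
    have dZbHc : DifferentiableAt ℝ (pdZb (fun y => ((H y : ℝ) : ℂ))) x := Tool.sm_diff hU (Tool.sm_pdZb hU hHc) hx
    have dZL : DifferentiableAt ℝ (pdZ (fun y => ((ξl y : ℝ) : ℂ))) x := Tool.sm_diff hU (Tool.sm_pdZ hU hL) hx
    have dZbL : DifferentiableAt ℝ (pdZb (fun y => ((ξl y : ℝ) : ℂ))) x := Tool.sm_diff hU (Tool.sm_pdZb hU hL) hx
    have dB : DifferentiableAt ℝ (fun y => pdZ (fun y => ((H y : ℝ) : ℂ)) y * pdZb (fun y => ((ξl y : ℝ) : ℂ)) y) x := dZHc.mul dZbL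
    have dCt : DifferentiableAt ℝ (fun y => pdZb (fun y => ((H y : ℝ) : ℂ)) y * pdZ (fun y => ((ξl y : ℝ) : ℂ)) y) x := dZbHc.mul dZL
    have s1 : pdC 0 (fun y => -2 * pdC 1 (pdC 1 (fun y => ((ξl y : ℝ) : ℂ))) y + pdZ (fun y => ((H y : ℝ) : ℂ)) y * pdZb (fun y => ((ξl y : ℝ) : ℂ)) y
            + pdZb (fun y => ((H y : ℝ) : ℂ)) y * pdZ (fun y => ((ξl y : ℝ) : ℂ)) y) x
        = pdC 0 (fun y => -2 * pdC 1 (pdC 1 (fun y => ((ξl y : ℝ) : ℂ))) y + pdZ (fun y => ((H y : ℝ) : ℂ)) y * pdZb (fun y => ((ξl y : ℝ) : ℂ)) y) x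
          + pdC 0 (fun y => pdZb (fun y => ((H y : ℝ) : ℂ)) y * pdZ (fun y => ((ξl y : ℝ) : ℂ)) y) x := Tool.pdC_add (dA.add dB) dCt 0
    have s2 : pdC 0 (fun y => -2 * pdC 1 (pdC 1 (fun y => ((ξl y : ℝ) : ℂ))) y + pdZ (fun y => ((H y : ℝ) : ℂ)) y * pdZb (fun y => ((ξl y : ℝ) : ℂ)) y) x
        = pdC 0 (fun y => (-2 : ℂ) * pdC 1 (pdC 1 (fun y => ((ξl y : ℝ) : ℂ))) y) x
          + pdC 0 (fun y => pdZ (fun y => ((H y : ℝ) : ℂ)) y * pdZb (fun y => ((ξl y : ℝ) : ℂ)) y) x := Tool.pdC_add dA dB 0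
    have s3 : pdC 0 (fun y => (-2 : ℂ) * pdC 1 (pdC 1 (fun y => ((ξl y : ℝ) : ℂ))) y) x
        = (-2 : ℂ) * pdC 0 (pdC 1 (pdC 1 (fun y => ((ξl y : ℝ) : ℂ)))) x := Tool.pdC_const_mul dPP (-2) 0
    have s4 : pdC 0 (pdC 1 (pdC 1 (fun y => ((ξl y : ℝ) : ℂ)))) x = 0 := by
      rw [Tool.pdC_swap hU (Tool.sm_pdC hU hL 1) hx 0 1]
      exact Tool.pdC_zero_of hU hD01L hx 1
    have s5 : pdC 0 (fun y => pdZ (fun y => ((H y : ℝ) : ℂ)) y * pdZb (fun y => ((ξl y : ℝ) : ℂ)) y) x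
        = pdC 0 (pdZ (fun y => ((H y : ℝ) : ℂ))) x * pdZb (fun y => ((ξl y : ℝ) : ℂ)) x + pdZ (fun y => ((H y : ℝ) : ℂ)) x * pdC 0 (pdZb (fun y => ((ξl y : ℝ) : ℂ))) x :=
      Tool.pdC_mul dZHc dZbL 0
    have s6 : pdC 0 (fun y => pdZb (fun y => ((H y : ℝ) : ℂ)) y * pdZ (fun y => ((ξl y : ℝ) : ℂ)) y) x
        = pdC 0 (pdZb (fun y => ((H y : ℝ) : ℂ))) x * pdZ (fun y => ((ξl y : ℝ) : ℂ)) x + pdZb (fun y => ((H y : ℝ) : ℂ)) x * pdC 0 (pdZ (fun y => ((ξl y : ℝ) : ℂ))) x :=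
      Tool.pdC_mul dZbHc dZL 0
    rw [h1, s1, s2, s3, s4, s5, s6, hD0pdZHc x hx, hD0pdZbHc x hx, hD0pdZL x hx,
      hD0pdZbL x hx]
    ring
  -- target (i).2 :  ∂_u ∂_ζ̄ K_nm̄ = 0
  have tA2 : ∀ x ∈ U, pdC 0 (pdZb (Knm H ξl ξn ξm)) x = 0 := by
    intro x hx
    have h1 : ∀ y ∈ U, pdZ (pdC 1 (fun y => ((ξl y : ℝ) : ℂ))) y = pdC 1 (pdZ (fun y => ((ξl y : ℝ) : ℂ))) y := fun y hy =>
      (Tool.pdC_pdZ_swap hU hL hy 1).symm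
    rw [Tool.pdC_pdZb_swap hU hKnmSm hx 0, Tool.pdZb_congr hU hD0Knm hx,
      Tool.pdZb_const_mul (Tool.sm_diff hU (Tool.sm_pdZ hU (Tool.sm_pdC hU hL 1)) hx) 2,
      Tool.pdZb_congr hU h1 hx, ← Tool.pdC_pdZb_swap hU (Tool.sm_pdZ hU hL) hx 1,
      Tool.pdC_zero_of hU hzz hx 1, mul_zero]
  -- target (i).3 :  ∂_u ∂_ζ̄² K_m̄m̄ = 0
  have tA3 : ∀ x ∈ U, pdC 0 (pdZb (pdZb (Kmm ξm))) x = 0 := by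
    intro x hx
    have h1 : ∀ y ∈ U, pdC 0 (pdZb (Kmm ξm)) y = 0 := by
      intro y hy
      rw [Tool.pdC_pdZb_swap hU hKmmSm hy 0]
      exact hZbD0Kmm y hy
    rw [Tool.pdC_pdZb_swap hU (Tool.sm_pdZb hU hKmmSm) hx 0]
    exact Tool.pdZb_zero_of hU h1 hx
  refine ⟨⟨tA1, tA2, tA3⟩, ?_⟩
  intro g0 g1 hg0 hg1 p0 p1 p2
  have hEq2 : ∀ x ∈ U, pdC 0 (pdC 0 g0) x = -2 * pdZ (pdZ (fun y => ((ξl y : ℝ) : ℂ))) x := by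
    intro x hx
    rw [Tool.pdC_congr hU p0 hx 0]
    exact hD0Kmm x hx
  have dZZL : ∀ x ∈ U, DifferentiableAt ℝ (pdZ (pdZ (fun y => ((ξl y : ℝ) : ℂ)))) x := fun x hx =>
    Tool.sm_diff hU (Tool.sm_pdZ hU (Tool.sm_pdZ hU hL)) hx
  have tG1 : ∀ x ∈ U, pdC 0 (pdC 0 (pdC 0 g0)) x = 0 := by
    intro x hx
    have h1 : ∀ y ∈ U, pdC 0 (pdZ (fun y => ((ξl y : ℝ) : ℂ))) y = 0 := hD0pdZL
    rw [Tool.pdC_congr hU hEq2 hx 0, Tool.pdC_const_mul (dZZL x hx) (-2) 0,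
      Tool.pdC_pdZ_swap hU (Tool.sm_pdZ hU hL) hx 0, Tool.pdZ_zero_of hU h1 hx, mul_zero]
  have tG2 : ∀ x ∈ U, pdZb (pdC 0 (pdC 0 g0)) x = 0 := by
    intro x hx
    rw [Tool.pdZb_congr hU hEq2 hx, Tool.pdZb_const_mul (dZZL x hx) (-2), h3z x hx, mul_zero]
  have tG3 : ∀ x ∈ U, pdC 0 (pdC 0 (pdC 0 g1)) x = 0 := by
    have hp1' : ∀ x ∈ U, pdC 0 g1 x = 2 * Knm H ξl ξn ξm x + pdZb g0 x := by
      intro x hx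
      have h := p1 x hx
      rw [sub_eq_iff_eq_add] at h
      exact h
    have hgg : ∀ x ∈ U, pdC 0 (pdC 0 g1) x
        = 2 * (2 * pdZ (pdC 1 (fun y => ((ξl y : ℝ) : ℂ))) x) + pdZb (Kmm ξm) x := by
      intro x hx
      have dK : DifferentiableAt ℝ (Knm H ξl ξn ξm) x := Tool.sm_diff hU hKnmSm hx
      have dZbg0 : DifferentiableAt ℝ (pdZb g0) x := Tool.sm_diff hU (Tool.sm_pdZb hU hg0) hx
      rw [Tool.pdC_congr hU hp1' hx 0, Tool.pdC_add (dK.const_mul 2) dZbg0 0,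
        Tool.pdC_const_mul dK 2 0, hD0Knm x hx, Tool.pdC_pdZb_swap hU hg0 hx 0,
        Tool.pdZb_congr hU p0 hx]
    intro x hx
    have dP : DifferentiableAt ℝ (pdZ (pdC 1 (fun y => ((ξl y : ℝ) : ℂ)))) x :=
      Tool.sm_diff hU (Tool.sm_pdZ hU (Tool.sm_pdC hU hL 1)) hx
    have dP2 : DifferentiableAt ℝ (fun y => (2 : ℂ) * pdZ (pdC 1 (fun y => ((ξl y : ℝ) : ℂ))) y) x := dP.const_mul 2
    have dKb : DifferentiableAt ℝ (pdZb (Kmm ξm)) x :=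
      Tool.sm_diff hU (Tool.sm_pdZb hU hKmmSm) hx
    have h1 : pdC 0 (pdZ (pdC 1 (fun y => ((ξl y : ℝ) : ℂ)))) x = 0 := by
      rw [Tool.pdC_pdZ_swap hU (Tool.sm_pdC hU hL 1) hx 0]
      exact Tool.pdZ_zero_of hU hD01L hx
    have h2 : pdC 0 (pdZb (Kmm ξm)) x = 0 := by
      rw [Tool.pdC_pdZb_swap hU hKmmSm hx 0]
      exact hZbD0Kmm x hx
    rw [Tool.pdC_congr hU hgg hx 0, Tool.pdC_add (dP2.const_mul 2) dKb 0,
      Tool.pdC_const_mul dP2 2 0, Tool.pdC_const_mul dP 2 0, h1, h2]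
    ring
  exact ⟨tG1, tG2, tG3⟩

end
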